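/- Let H' be the graph obtained from the path decomposition graph H by removing, for each vertex v and each decomposition path P not containing v, all incoming cross edges (u,v) with u ∈ P except the one whose tail u is latest in the order of P. Then H' has the same reachability relation as G, and every edge of H that is removed is a transitive edge of G. -/

import Mathlib

private lemma walk7 {V : Type*} {k : ℕ} {R : V → V → Prop} (P : Fin k → List V) (i : Fin k)
    (hR : ∀ n (w w' : V), (P i)[n]? = some w → (P i)[n+1]? = some w' → R w w')
    {n m : ℕ} (hnm : n ≤ m) {w w' : V}
    (hw : (P i)[n]? = some w) (hw' : (P i)[m]? = some w') :
    Relation.ReflTransGen R w w' := by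
  induction m, hnm using Nat.le_induction generalizing w' with
  | base => rw [hw] at hw'; cases hw'; exact .refl
  | succ m hm ih =>
    have hlt : m < (P i).length := by
      have := (List.getElem?_eq_some_iff.mp hw').1; omega
    have hmid : (P i)[m]? = some ((P i)[m]) := List.getElem?_eq_getElem hlt
    exact (ih hmid).tail (hR m _ _ hmid hw')

private lemma step7 {V : Type*} {k : ℕ} {E : V → V → Prop} {P : Fin k → List V}
    (hpath : ∀ i, List.Chain' E (P i)) (i : Fin k) (n : ℕ) (w w' : V)
    (hw : (P i)[n]? = some w) (hw' : (P i)[n+1]? = some w') : E w w' := by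
  obtain ⟨h1, h2⟩ := List.getElem?_eq_some_iff.mp hw'
  obtain ⟨h3, h4⟩ := List.getElem?_eq_some_iff.mp hw
  subst h2 h4
  have := List.isChain_iff_getElem.mp (hpath i) n (by omega)
  simpa [List.get_eq_getElem] using this

/-- Let `H'` (edge relation `A'`) be obtained from the path
decomposition graph `H` (edge relation `A`) by keeping, for each vertex `v` and
each decomposition path, only the incoming cross edge whose tail is latest in the
order of that path. Then `H'` has the same reachability relation as `G`, and every
removed edge of `H` is a transitive edge of `G`. -/
theorem stmt7 {V : Type*} {k : ℕ} (E : V → V → Prop)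
    (P : Fin k → List V)
    (hacyc : ∀ v, ¬ Relation.TransGen E v v)
    (hpath : ∀ i, List.Chain' E (P i))
    (idx : V → Fin k) (pos : V → ℕ)
    (hmem : ∀ v, (P (idx v))[pos v]? = some v)
    (huniq : ∀ (i : Fin k) (n : ℕ) (v : V), (P i)[n]? = some v → i = idx v ∧ n = pos v)
    (A A' : V → V → Prop)
    (hA : ∀ u v, A u v ↔ E u v ∧ (idx u ≠ idx v ∨ (idx u = idx v ∧ pos v = pos u + 1)))
    (hA' : ∀ u v, A' u v ↔
      A u v ∧ (idx u = idx v ∨ ∀ u', A u' v → idx u' = idx u → pos u' ≤ pos u)) :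
    (∀ a b, Relation.ReflTransGen A' a b ↔ Relation.ReflTransGen E a b) ∧
    (∀ u v, A u v → ¬ A' u v →
      Relation.TransGen (fun a b => E a b ∧ ¬(a = u ∧ b = v)) u v) := by
  classical
  -- consecutive elements of a path form A' edges
  have hstepA' : ∀ i n (w w' : V), (P i)[n]? = some w → (P i)[n+1]? = some w' → A' w w' := by
    intro i n w w' hw hw'
    obtain ⟨hiw, hnw⟩ := huniq i n w hw
    obtain ⟨hiw', hnw'⟩ := huniq i (n+1) w' hw'
    have hE : E w w' := step7 hpath i n w w' hw hw'
    have hAe : A w w' := (hA w w').mpr ⟨hE, Or.inr ⟨hiw.symm.trans hiw', by omega⟩⟩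
    exact (hA' w w').mpr ⟨hAe, Or.inl (hiw.symm.trans hiw')⟩
  -- vertices in the same path with nondecreasing position: A'-reachable
  have hsame : ∀ w w' : V, idx w = idx w' → pos w ≤ pos w' → Relation.ReflTransGen A' w w' := by
    intro w w' hi hp
    have hw' : (P (idx w))[pos w']? = some w' := by rw [hi]; exact hmem w'
    exact walk7 P (idx w) (hstepA' (idx w)) hp (hmem w) hw'
  -- same-path E edge implies pos increases
  have hposlt : ∀ w w' : V, E w w' → idx w = idx w' → pos w < pos w' := by
    intro w w' hE hi
    by_contra h
    push_neg at h
    have hw' : (P (idx w))[pos w']? = some w' := by rw [hi]; exact hmem w'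
    have hreach : Relation.ReflTransGen E w' w :=
      walk7 P (idx w) (fun n a b ha hb => step7 hpath (idx w) n a b ha hb) h hw' (hmem w)
    exact hacyc w' (Relation.TransGen.tail' hreach hE)
  -- every A edge is A'-reachable
  have hAreach : ∀ u v : V, A u v → Relation.ReflTransGen A' u v := by
    intro u v hAuv
    by_cases hi : idx u = idx v
    · -- intra-path edge: A edge forces pos v = pos u + 1, directly A'
      exact Relation.ReflTransGen.single ((hA' u v).mpr ⟨hAuv, Or.inl hi⟩)
    · -- cross edge: go to the latest tail in path idx u
      set Q : ℕ → Prop := fun n => ∃ w : V, (P (idx u))[n]? = some w ∧ A w v with hQ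
      set b := (P (idx u)).length with hb
      have hposu : pos u < b := (List.getElem?_eq_some_iff.mp (hmem u)).1
      have hQu : Q (pos u) := ⟨u, hmem u, hAuv⟩
      set N := Nat.findGreatest Q b with hN
      have hQN : Q N := Nat.findGreatest_spec (le_of_lt hposu) hQu
      obtain ⟨w, hwN, hAwv⟩ := hQN
      obtain ⟨hiw, hnw⟩ := huniq (idx u) N w hwN
      have hle : pos u ≤ N := Nat.le_findGreatest (le_of_lt hposu) hQu
      have hA'wv : A' w v := by
        refine (hA' w v).mpr ⟨hAwv, Or.inr ?_⟩
        intro u' hAu' hiu'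
        have hiu'u : idx u' = idx u := hiu'.trans hiw.symm
        have hposu' : pos u' < b := by
          have := (List.getElem?_eq_some_iff.mp (hmem u')).1
          rw [hiu'u] at this; exact this
        have hQu' : Q (pos u') := ⟨u', by rw [← hiu'u]; exact hmem u', hAu'⟩
        by_contra hgt
        push_neg at hgt
        rw [← hnw] at hgt
        exact Nat.findGreatest_is_greatest hgt (le_of_lt hposu') hQu'
      have : Relation.ReflTransGen A' u w := hsame u w hiw (hnw ▸ hle)
      exact this.tail hA'wv
  refine ⟨fun a b => ⟨?_, ?_⟩, ?_⟩
  · intro h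
    refine Relation.ReflTransGen.mono (fun x y hxy => ?_) a b h
    exact ((hA x y).mp ((hA' x y).mp hxy).1).1
  · intro h
    induction h with
    | refl => exact .refl
    | @tail b c hab hbc ih =>
      refine ih.trans ?_
      by_cases hi : idx b = idx c
      · have hlt := hposlt b c hbc hi
        have hc : (P (idx b))[pos c]? = some c := by rw [hi]; exact hmem c
        exact walk7 P (idx b) (hstepA' (idx b)) (le_of_lt hlt) (hmem b) hc
      · exact hAreach b c ((hA b c).mpr ⟨hbc, Or.inl hi⟩)
  · intro u v hAuv hnA'
    have hne : idx u ≠ idx v ∧ ∃ u', A u' v ∧ idx u' = idx u ∧ pos u < pos u' := by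
      rw [hA'] at hnA'
      push_neg at hnA'
      obtain ⟨h1, u', h2, h3, h4⟩ := hnA' hAuv
      exact ⟨h1, u', h2, h3, h4⟩
    obtain ⟨hi, u', hAu', hiu', hplt⟩ := hne
    set R : V → V → Prop := fun a b => E a b ∧ ¬(a = u ∧ b = v) with hR
    have hwalk : Relation.ReflTransGen R u u' := by
      refine walk7 P (idx u) (fun n w w' hw hw' => ?_) (le_of_lt hplt) (hmem u)
        (by rw [← hiu']; exact hmem u')
      have hE : E w w' := step7 hpath (idx u) n w w' hw hw'
      refine ⟨hE, fun ⟨h1, h2⟩ => ?_⟩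
      obtain ⟨hiw', _⟩ := huniq (idx u) (n+1) w' hw'
      exact hi (by rw [← h2, ← hiw'])
    have hEu'v : E u' v := ((hA u' v).mp hAu').1
    have hlast : R u' v := ⟨hEu'v, by rintro ⟨rfl, -⟩; omega⟩
    exact Relation.TransGen.tail' hwalk hlast
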